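/- Let Y and D be random variables with D taking finitely many values, and let S be a random vector taking finitely many values such that D = A(S) for a function A. Fix d with P(D=d) > 0 and P(D=d-1) > 0. Suppose a weighting function w on pairs (s_d, s_{d-1}) with A(s_d)=d, A(s_{d-1})=d-1 satisfies: (i) for each s_{d-1}, ∑_{s_d} w(s_d, s_{d-1}) = P(S=s_{d-1} | D=d-1), and (ii) for each s_d, ∑_{s_{d-1}} w(s_d, s_{d-1}) = P(S=s_d | D=d). Then E[Y | D=d] − E[Y | D=d-1] = ∑_{(s_d, s_{d-1})} w(s_d, s_{d-1}) · (E[Y | S=s_d] − E[Y | S=s_{d-1}]). -/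

import Mathlib

open Finset

/- Probability of an event, conditional probability `P(A|B)`, and conditional
expectation `E[Y|A]` under a mass function `p` on a finite sample space. -/

open Classical in
noncomputable def Pr {Ω : Type*} [Fintype Ω] (p : Ω → ℝ) (A : Ω → Prop) : ℝ :=
  ∑ ω, if A ω then p ω else 0

noncomputable def cPr {Ω : Type*} [Fintype Ω] (p : Ω → ℝ) (A B : Ω → Prop) : ℝ :=
  Pr p (fun ω => A ω ∧ B ω) / Pr p B

open Classical in
noncomputable def cexp {Ω : Type*} [Fintype Ω] (p : Ω → ℝ) (Y : Ω → ℝ) (A : Ω → Prop) : ℝ :=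
  (∑ ω, if A ω then p ω * Y ω else 0) / Pr p A

open Classical in
lemma cexp_split {Ω V : Type*} [Fintype Ω] [Fintype V] [DecidableEq V]
    (p : Ω → ℝ) (Y : Ω → ℝ) (S : Ω → V) (A : V → ℕ) (D : Ω → ℕ)
    (hD : ∀ ω, D ω = A (S ω)) (e : ℕ)
    (hposS : ∀ s : V, A s = e → 0 < Pr p (fun ω => S ω = s)) :
    cexp p Y (fun ω => D ω = e)
      = ∑ s ∈ univ.filter (fun s => A s = e),
          cPr p (fun ω => S ω = s) (fun ω => D ω = e)
            * cexp p Y (fun ω => S ω = s) := by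
  have hterm : ∀ s ∈ univ.filter (fun s => A s = e),
      cPr p (fun ω => S ω = s) (fun ω => D ω = e)
          * cexp p Y (fun ω => S ω = s)
        = (∑ ω, if S ω = s then p ω * Y ω else 0) / Pr p (fun ω => D ω = e) := by
    intro s hs
    simp only [mem_filter] at hs
    have hA : A s = e := hs.2
    have hiff : ∀ ω, (S ω = s ∧ D ω = e) ↔ S ω = s := by
      intro ω
      constructor
      · exact fun h => h.1
      · intro h; exact ⟨h, by rw [hD, h, hA]⟩
    have hPr : Pr p (fun ω => S ω = s ∧ D ω = e) = Pr p (fun ω => S ω = s) := by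
      unfold Pr
      exact Finset.sum_congr rfl (fun ω _ => by simp [hiff ω])
    have hpos := hposS s hA
    unfold cPr cexp
    rw [hPr]
    field_simp
  rw [Finset.sum_congr rfl hterm, ← Finset.sum_div]
  unfold cexp
  congr 1
  rw [Finset.sum_comm]
  refine Finset.sum_congr rfl (fun ω _ => ?_)
  by_cases h : D ω = e
  · rw [if_pos h, Finset.sum_eq_single (S ω)]
    · rw [if_pos rfl]
    · intro s _ hne; rw [if_neg (fun h' => hne h'.symm)]
    · intro habs
      exact absurd (mem_filter.mpr ⟨mem_univ _, by rw [← hD ω, h]⟩) habs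
  · rw [if_neg h]
    refine (Finset.sum_eq_zero (fun s hs => ?_)).symm
    simp only [mem_filter] at hs
    rw [if_neg (fun h' => h (by rw [hD, h', hs.2]))]

/-- Decomposition of the aggregate marginal effect: any weighting function `w`
coupling the conditional distributions of `S` given `D = d` and `D = d - 1`
represents `E[Y|D=d] − E[Y|D=d-1]` as a `w`-weighted sum of pairwise differences
of conditional means `E[Y|S=s_d] − E[Y|S=s_{d-1}]`. -/
theorem marginal_decomposition
    {Ω V : Type*} [Fintype Ω] [Fintype V] [DecidableEq V]
    (p : Ω → ℝ) (hp0 : ∀ ω, 0 ≤ p ω) (hp1 : ∑ ω, p ω = 1)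
    (Y : Ω → ℝ) (S : Ω → V) (A : V → ℕ) (D : Ω → ℕ) (hD : ∀ ω, D ω = A (S ω))
    (d : ℕ) (hd : 1 ≤ d)
    (hPd : 0 < Pr p (fun ω => D ω = d)) (hPd1 : 0 < Pr p (fun ω => D ω = d - 1))
    (hposS : ∀ s : V, (A s = d ∨ A s = d - 1) → 0 < Pr p (fun ω => S ω = s))
    (w : V → V → ℝ)
    (hw1 : ∀ s' : V, A s' = d - 1 →
      ∑ s ∈ univ.filter (fun s => A s = d), w s s'
        = cPr p (fun ω => S ω = s') (fun ω => D ω = d - 1))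
    (hw2 : ∀ s : V, A s = d →
      ∑ s' ∈ univ.filter (fun s' => A s' = d - 1), w s s'
        = cPr p (fun ω => S ω = s) (fun ω => D ω = d)) :
    cexp p Y (fun ω => D ω = d) - cexp p Y (fun ω => D ω = d - 1)
      = ∑ s ∈ univ.filter (fun s => A s = d),
          ∑ s' ∈ univ.filter (fun s' => A s' = d - 1),
            w s s' *
              (cexp p Y (fun ω => S ω = s) - cexp p Y (fun ω => S ω = s')) := by
  have h1 : cexp p Y (fun ω => D ω = d)
      = ∑ s ∈ univ.filter (fun s => A s = d),
          ∑ s' ∈ univ.filter (fun s' => A s' = d - 1),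
            w s s' * cexp p Y (fun ω => S ω = s) := by
    rw [cexp_split p Y S A D hD d (fun s hs => hposS s (Or.inl hs))]
    refine Finset.sum_congr rfl (fun s hs => ?_)
    simp only [mem_filter] at hs
    rw [← hw2 s hs.2, Finset.sum_mul]
  have h2 : cexp p Y (fun ω => D ω = d - 1)
      = ∑ s ∈ univ.filter (fun s => A s = d),
          ∑ s' ∈ univ.filter (fun s' => A s' = d - 1),
            w s s' * cexp p Y (fun ω => S ω = s') := by
    rw [cexp_split p Y S A D hD (d - 1) (fun s hs => hposS s (Or.inr hs))]
    rw [Finset.sum_comm]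
    refine Finset.sum_congr rfl (fun s' hs' => ?_)
    simp only [mem_filter] at hs'
    rw [← hw1 s' hs'.2, Finset.sum_mul]
  rw [h1, h2, ← Finset.sum_sub_distrib]
  refine Finset.sum_congr rfl (fun s _ => ?_)
  rw [← Finset.sum_sub_distrib]
  refine Finset.sum_congr rfl (fun s' _ => ?_)
  ring
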